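/- Every downward closed subset D of ℕ^d admits a finite basis, i.e., there exists a finite set B ⊆ ℕ_ω^d such that Lim D = ↓B. -/

import Mathlib

/-- Vectors over `ℕ∞ = ℕ ∪ {ω}`. -/
abbrev Vec (d : ℕ) := Fin d → ℕ∞

/-- A sequence in `ℕ∞` converges to `l` if it is ultimately constant equal to `l`,
or its integer values form an infinite subsequence tending to infinity and `l = ω`. -/
def ConvTo (s : ℕ → ℕ∞) (l : ℕ∞) : Prop :=
  (∃ N, ∀ n ≥ N, s n = l) ∨
  (l = ⊤ ∧ {n | s n ≠ ⊤}.Infinite ∧ ∀ B : ℕ, ∃ N, ∀ n ≥ N, (B : ℕ∞) ≤ s n)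

/-- Componentwise convergence of a sequence of vectors. -/
def VConvTo {d : ℕ} (s : ℕ → Vec d) (x : Vec d) : Prop :=
  ∀ i, ConvTo (fun n => s n i) (x i)

/-- The limit closure: the set of limits of convergent sequences of elements of `M`. -/
def LimCl {d : ℕ} (M : Set (Vec d)) : Set (Vec d) :=
  {x | ∃ s : ℕ → Vec d, (∀ n, s n ∈ M) ∧ VConvTo s x}

/-- Downward closure for the pointwise order on `ℕ∞^d`. -/
def dc {d : ℕ} (M : Set (Vec d)) : Set (Vec d) := {x | ∃ y ∈ M, x ≤ y}

/-- The copy of `ℕ^d` inside `ℕ∞^d`. -/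
def FinVec (d : ℕ) : Set (Vec d) := {x | ∀ i, x i ≠ ⊤}

/-- The embedding of `ℕ^d` into `ℕ∞^d`. -/
def toOmega {d : ℕ} (x : Fin d → ℕ) : Vec d := fun i => (x i : ℕ∞)

/-- Approximation predicate characterizing membership in the limit closure. -/
def Approx {d : ℕ} (D : Set (Fin d → ℕ)) (x : Vec d) : Prop :=
  ∀ k : ℕ, ∃ u ∈ D, (∀ i, x i ≠ ⊤ → (u i : ℕ∞) = x i) ∧ (∀ i, x i = ⊤ → (k : ℕ∞) ≤ (u i : ℕ∞))

lemma memL_iff {d : ℕ} (D : Set (Fin d → ℕ)) (x : Vec d) :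
    x ∈ LimCl (toOmega '' D) ↔ Approx D x := by
  constructor
  · rintro ⟨s, hs, hconv⟩ k
    have hfin : ∀ n i, s n i ≠ ⊤ := by
      intro n i
      obtain ⟨u, _, hus⟩ := hs n
      rw [← hus]
      exact WithTop.coe_ne_top
    have h1 : ∀ i, ∃ N, ∀ n ≥ N, (x i ≠ ⊤ → s n i = x i) ∧ (x i = ⊤ → (k : ℕ∞) ≤ s n i) := by
      intro i
      rcases hconv i with ⟨N, hN⟩ | ⟨hl, _, hB⟩
      · by_cases hx : x i = ⊤
        · exact absurd (hx ▸ hN N le_rfl) (hfin N i)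
        · exact ⟨N, fun n hn => ⟨fun _ => hN n hn, fun h => absurd h hx⟩⟩
      · obtain ⟨N, hN⟩ := hB k
        exact ⟨N, fun n hn => ⟨fun hx => absurd hl hx, fun _ => hN n hn⟩⟩
    choose N hN using h1
    set M := Finset.univ.sup N with hM
    obtain ⟨u, hu, hus⟩ := hs M
    refine ⟨u, hu, fun i hx => ?_, fun i hx => ?_⟩
    · have := (hN i M (Finset.le_sup (Finset.mem_univ i))).1 hx
      rw [← this, ← hus]; rfl
    · have := (hN i M (Finset.le_sup (Finset.mem_univ i))).2 hx
      rw [← hus] at this; exact this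
  · intro h
    choose u hu h1 h2 using h
    refine ⟨fun n => toOmega (u n), fun n => ⟨u n, hu n, rfl⟩, fun i => ?_⟩
    by_cases hx : x i = ⊤
    · right
      refine ⟨hx, ?_, fun B => ⟨B, fun n hn => ?_⟩⟩
      · have : {n : ℕ | toOmega (u n) i ≠ ⊤} = Set.univ := by
          ext n; simp [toOmega]
        rw [this]; exact Set.infinite_univ
      · exact le_trans (by exact_mod_cast hn) (h2 n i hx)
    · exact Or.inl ⟨0, fun n _ => h1 n i hx⟩

lemma approx_dc {d : ℕ} {D : Set (Fin d → ℕ)}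
    (hD : ∀ x y : Fin d → ℕ, x ≤ y → y ∈ D → x ∈ D) {x y : Vec d}
    (hxy : x ≤ y) (hy : Approx D y) : Approx D x := by
  intro k
  set K := max k (Finset.univ.sup fun i => (x i).toNat) with hK
  obtain ⟨u, hu, h1, h2⟩ := hy K
  have hx_le : ∀ i, x i ≠ ⊤ → (x i).toNat ≤ u i := by
    intro i hx
    by_cases hyt : y i = ⊤
    · have : (K : ℕ∞) ≤ (u i : ℕ∞) := h2 i hyt
      have hK' : K ≤ u i := by exact_mod_cast this
      calc (x i).toNat ≤ Finset.univ.sup (fun i => (x i).toNat) :=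
            Finset.le_sup (f := fun i => (x i).toNat) (Finset.mem_univ i)
        _ ≤ K := le_max_right _ _
        _ ≤ u i := hK'
    · have hxy' : x i ≤ (u i : ℕ∞) := (h1 i hyt) ▸ (hxy i)
      have := ENat.toNat_le_toNat hxy' (by exact WithTop.coe_ne_top)
      simpa using this
  refine ⟨fun i => if x i = ⊤ then u i else min (u i) ((x i).toNat), ?_, ?_, ?_⟩
  · refine hD _ u (fun i => ?_) hu
    by_cases hx : x i = ⊤ <;> simp [hx]
  · intro i hx
    simp only [if_neg hx, min_eq_right (hx_le i hx)]
    exact (ENat.coe_toNat hx)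
  · intro i hx
    have hyt : y i = ⊤ := top_le_iff.mp (hx ▸ hxy i)
    simp only [if_pos hx]
    exact le_trans (by exact_mod_cast le_max_left k _) (h2 i hyt)

lemma chain_bound {α : Type*} [PartialOrder α] {C : Set α} (hC : IsChain (· ≤ ·) C)
    (hne : C.Nonempty) {ι : Type*} [Finite ι] (f : ι → α) (hf : ∀ i, f i ∈ C) :
    ∃ c ∈ C, ∀ i, f i ≤ c := by
  rcases isEmpty_or_nonempty ι with h | h
  · exact ⟨hne.choose, hne.choose_spec, fun i => isEmptyElim i⟩
  · obtain ⟨a, haR, ha⟩ := (Set.finite_range f).exists_maximal (Set.range_nonempty f)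
    obtain ⟨i0, rfl⟩ := haR
    refine ⟨f i0, hf i0, fun i => ?_⟩
    rcases eq_or_ne (f i) (f i0) with h' | h'
    · exact h'.le
    · rcases hC (hf i) (hf i0) h' with h'' | h''
      · exact h''
      · exact (ha ⟨i, rfl⟩ h'').ge

lemma approx_sSup {d : ℕ} {D : Set (Fin d → ℕ)} {C : Set (Vec d)}
    (hC : IsChain (· ≤ ·) C) (hne : C.Nonempty) (hCA : ∀ c ∈ C, Approx D c) :
    Approx D (sSup C) := by
  intro k
  have hub : ∀ c ∈ C, c ≤ sSup C := fun c hc => le_sSup hc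
  have hV : ∀ i : Fin d, sSup ((fun c : Vec d => c i) '' C) = sSup C i := by
    intro i
    rw [sSup_image', sSup_apply]
  have hpick : ∀ i : Fin d, ∃ c ∈ C,
      (sSup C i ≠ ⊤ → c i = sSup C i) ∧ (sSup C i = ⊤ → (k : ℕ∞) ≤ c i) := by
    intro i
    by_cases htop : sSup C i = ⊤
    · by_contra h
      push_neg at h
      have hle : sSup ((fun c : Vec d => c i) '' C) ≤ (k : ℕ∞) := by
        apply sSup_le
        rintro _ ⟨c, hc, rfl⟩
        exact (h c hc (fun hx => absurd htop hx)).2.le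
      rw [hV i, htop] at hle
      exact absurd hle (by simp)
    · haveI : Nonempty ↥((fun c : Vec d => c i) '' C) := (hne.image _).to_subtype
      have hlt : sSup ((fun c : Vec d => c i) '' C) < ⊤ := by
        rw [hV i]; exact lt_top_iff_ne_top.mpr htop
      obtain ⟨c, hc, hci⟩ := ENat.sSup_mem_of_nonempty_of_lt_top hlt
      have hci' : c i = sSup ((fun c : Vec d => c i) '' C) := hci
      exact ⟨c, hc, fun _ => by rw [hci', hV i], fun h => absurd h htop⟩
  choose f hfC hf using hpick
  obtain ⟨c, hcC, hfc⟩ := chain_bound hC hne f hfC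
  obtain ⟨u, hu, h1, h2⟩ := hCA c hcC k
  refine ⟨u, hu, ?_, ?_⟩
  · intro i hx
    have hci : f i i = sSup C i := (hf i).1 hx
    have hcs : c i = sSup C i := le_antisymm (hub c hcC i) (hci ▸ hfc i i)
    have hc_ne : c i ≠ ⊤ := hcs ▸ hx
    rw [h1 i hc_ne, hcs]
  · intro i hx
    have hk : (k : ℕ∞) ≤ c i := le_trans ((hf i).2 hx) (hfc i i)
    by_cases hc : c i = ⊤
    · exact h2 i hc
    · rw [h1 i hc]; exact hk


/-- Every downward closed subset `D` of `ℕ^d` admits a finite basis `B ⊆ ℕ_ω^d`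
with `Lim D = ↓B`. -/
theorem stmt_4 {d : ℕ} (D : Set (Fin d → ℕ))
    (hD : ∀ x y : Fin d → ℕ, x ≤ y → y ∈ D → x ∈ D) :
    ∃ B : Set (Vec d), B.Finite ∧ LimCl (toOmega '' D) = dc B := by
  set L : Set (Vec d) := {x | Approx D x} with hL
  set B : Set (Vec d) := {x | Maximal (· ∈ L) x} with hB
  have hBL : B ⊆ L := fun x hx => hx.prop
  have hanti : IsAntichain (· ≤ ·) B := by
    intro a ha b hb hab hle
    exact hab (le_antisymm hle (ha.2 hb.1 hle))
  haveI : IsWellOrder ℕ∞ (· < ·) := ⟨⟩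
  refine ⟨B, hanti.finite_of_partiallyWellOrderedOn (Set.isPWO_of_wellQuasiOrderedLE B), ?_⟩
  ext x
  rw [memL_iff]
  constructor
  · intro hx
    obtain ⟨m, hxm, hm⟩ := zorn_le_nonempty₀ L
      (fun c hcL hc y hy => ⟨sSup c, approx_sSup hc ⟨y, hy⟩ (fun z hz => hcL hz),
        fun z hz => le_sSup hz⟩) x hx
    exact ⟨m, hm, hxm⟩
  · rintro ⟨b, hb, hxb⟩
    exact approx_dc hD hxb hb.prop
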